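/- Let n ≥ 2 and 1 ≤ s ≤ n/2 be integers and K a field. If δ : M_n(K) → M_n(K) satisfies δ(xy) = δ(x)y + xδ(y) for all x, y ∈ M_n(K) of rank exactly s, then δ(0) = 0. -/

import Mathlib

open Matrix

theorem stmt_3 {n s : ℕ} (K : Type*) [Field K]
    (hn : 2 ≤ n) (hs1 : 1 ≤ s) (hs2 : 2 * s ≤ n)
    (δ : Matrix (Fin n) (Fin n) K → Matrix (Fin n) (Fin n) K)
    (hδ : ∀ x y : Matrix (Fin n) (Fin n) K,
      x.rank = s → y.rank = s → δ (x * y) = δ x * y + x * δ y) :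
    δ 0 = 0 := by
  classical
  -- block indicator weights
  set we : Fin n → K := fun i => if (i : ℕ) < s then 1 else 0 with hwe
  set wf : Fin n → K := fun i => if (i : ℕ) < s then 0 else if (i : ℕ) < 2 * s then 1 else 0
    with hwf
  set e : Matrix (Fin n) (Fin n) K := Matrix.diagonal we with he
  set f : Matrix (Fin n) (Fin n) K := Matrix.diagonal wf with hf
  -- the block-swapping involution
  have hg : Function.Involutive (fun i : Fin n =>
      if h1 : (i : ℕ) < s then (⟨(i : ℕ) + s, by omega⟩ : Fin n)
      else if h2 : (i : ℕ) < 2 * s then ⟨(i : ℕ) - s, by omega⟩ else i) := by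
    intro i
    by_cases h1 : (i : ℕ) < s
    · simp only [h1, dif_pos]
      have hx1 : ¬ ((i : ℕ) + s < s) := by omega
      have hx2 : (i : ℕ) + s < 2 * s := by omega
      simp only [hx1, dif_neg, not_false_iff, hx2, dif_pos]
      ext
      simp
    · by_cases h2 : (i : ℕ) < 2 * s
      · simp only [h1, dif_neg, not_false_iff, h2, dif_pos]
        have hx1 : (i : ℕ) - s < s := by omega
        simp only [hx1, dif_pos]
        ext
        simp
        omega
      · simp only [h1, h2, dif_neg, not_false_iff]
  set σ : Equiv.Perm (Fin n) := hg.toPerm _ with hσ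
  set P : Matrix (Fin n) (Fin n) K := σ.toPEquiv.toMatrix with hP
  have hPdet : IsUnit P.det := by
    rw [hP, ← Equiv.Perm.permMatrix, Matrix.det_permutation]
    rcases Int.units_eq_one_or (Equiv.Perm.sign σ) with h | h <;> rw [h] <;> simp
  have hPM : ∀ M : Matrix (Fin n) (Fin n) K, P * M = M.submatrix σ id := fun M =>
    PEquiv.toMatrix_toPEquiv_mul σ M
  have hMP : ∀ M : Matrix (Fin n) (Fin n) K, M * P = M.submatrix id σ.symm := fun M =>
    PEquiv.mul_toMatrix_toPEquiv M σ
  have hσspec : ∀ i : Fin n, we (σ i) = wf i := by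
    intro i
    by_cases h1 : (i : ℕ) < s
    · have hσi : σ i = (⟨(i : ℕ) + s, by omega⟩ : Fin n) := by
        simp [hσ, Function.Involutive.toPerm, h1]
      rw [hσi]
      have hx : ¬ ((i : ℕ) + s < s) := by omega
      simp [hwe, hwf, h1, hx]
    · by_cases h2 : (i : ℕ) < 2 * s
      · have hσi : σ i = (⟨(i : ℕ) - s, by omega⟩ : Fin n) := by
          simp [hσ, Function.Involutive.toPerm, h1, h2]
        rw [hσi]
        have hx : (i : ℕ) - s < s := by omega
        simp [hwe, hwf, h1, h2, hx]
      · have hσi : σ i = i := by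
          simp [hσ, Function.Involutive.toPerm, h1, h2]
        rw [hσi]
        simp [hwe, hwf, h1, h2]
  have hσspec2 : ∀ i : Fin n, wf (σ i) = we i := by
    intro i
    have h := hσspec (σ i)
    have hinv : σ (σ i) = i := hg i
    rw [hinv] at h
    exact h.symm
  have key : ∀ (w1 w2 : Fin n → K), (∀ i, w1 (σ i) = w2 i) →
      P * Matrix.diagonal w1 = Matrix.diagonal w2 * P := by
    intro w1 w2 hw
    rw [hPM, hMP]
    ext i j
    simp only [Matrix.submatrix_apply, id_eq, Matrix.diagonal_apply]
    by_cases h : σ i = j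
    · have h' : i = σ.symm j := by rw [← h]; simp
      rw [if_pos h, if_pos h']
      exact hw i
    · have h' : ¬ i = σ.symm j := by
        intro hc; apply h; rw [hc]; simp
      rw [if_neg h, if_neg h']
  have hPe : P * e = f * P := key we wf hσspec
  have hPf : P * f = e * P := key wf we hσspec2
  -- products among e, f
  have hee : e * e = e := by
    rw [he, Matrix.diagonal_mul_diagonal]
    ext i j
    by_cases hij : i = j
    · subst hij
      simp only [Matrix.diagonal_apply_eq, Pi.mul_apply]
      by_cases h : (i : ℕ) < s <;> simp [hwe, h]
    · rw [Matrix.diagonal_apply_ne _ hij, Matrix.diagonal_apply_ne _ hij]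
  have hff : f * f = f := by
    rw [hf, Matrix.diagonal_mul_diagonal]
    ext i j
    by_cases hij : i = j
    · subst hij
      simp only [Matrix.diagonal_apply_eq, Pi.mul_apply]
      by_cases h1 : (i : ℕ) < s
      · simp [hwf, h1]
      · by_cases h2 : (i : ℕ) < 2 * s <;> simp [hwf, h1, h2]
    · rw [Matrix.diagonal_apply_ne _ hij, Matrix.diagonal_apply_ne _ hij]
  have hef : e * f = 0 := by
    rw [he, hf, Matrix.diagonal_mul_diagonal]
    ext i j
    simp only [Matrix.diagonal_apply, Matrix.zero_apply, Pi.mul_apply, hwe, hwf]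
    by_cases h : i = j
    · rw [if_pos h]
      by_cases h1 : (i : ℕ) < s <;> simp [h1]
    · rw [if_neg h]
  have hfe : f * e = 0 := by
    rw [he, hf, Matrix.diagonal_mul_diagonal]
    ext i j
    simp only [Matrix.diagonal_apply, Matrix.zero_apply, Pi.mul_apply, hwe, hwf]
    by_cases h : i = j
    · rw [if_pos h]
      by_cases h1 : (i : ℕ) < s <;> simp [h1]
    · rw [if_neg h]
  -- the nilpotents (explicit form first)
  have huu : (e * P) * (e * P) = 0 := by
    calc (e * P) * (e * P) = e * (P * e) * P := by noncomm_ring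
    _ = (e * f) * (P * P) := by rw [hPe]; noncomm_ring
    _ = 0 := by rw [hef, zero_mul]
  have heu : e * (e * P) = e * P := by rw [← mul_assoc, hee]
  have hvv : (f * P) * (f * P) = 0 := by
    calc (f * P) * (f * P) = f * (P * f) * P := by noncomm_ring
    _ = (f * e) * (P * P) := by rw [hPf]; noncomm_ring
    _ = 0 := by rw [hfe, zero_mul]
  have hfv : f * (f * P) = f * P := by rw [← mul_assoc, hff]
  -- ranks
  have hranke : e.rank = s := by
    rw [he, Matrix.rank_diagonal]
    have hiff : ∀ i : Fin n, we i ≠ 0 ↔ (i : ℕ) < s := by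
      intro i
      by_cases h : (i : ℕ) < s <;> simp [hwe, h]
    rw [Fintype.card_congr (Equiv.subtypeEquivRight hiff)]
    rw [Fintype.card_congr
      (⟨fun i => (⟨(i : ℕ), i.2⟩ : Fin s), fun j => ⟨⟨(j : ℕ), by omega⟩, j.2⟩,
        fun i => by ext; rfl, fun j => by ext; rfl⟩ :
        {i : Fin n // (i : ℕ) < s} ≃ Fin s)]
    exact Fintype.card_fin s
  have hrankf : f.rank = s := by
    have hr1 : (f * P).rank = f.rank := Matrix.rank_mul_eq_left_of_isUnit_det _ _ hPdet
    have hr2 : (P * e).rank = e.rank := Matrix.rank_mul_eq_right_of_isUnit_det _ _ hPdet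
    rw [← hr1, ← hPe, hr2, hranke]
  have hranku : (e * P).rank = s := by
    rw [Matrix.rank_mul_eq_left_of_isUnit_det _ _ hPdet, hranke]
  have hrankv : (f * P).rank = s := by
    rw [Matrix.rank_mul_eq_left_of_isUnit_det _ _ hPdet, hrankf]
  -- now name the nilpotents
  set u : Matrix (Fin n) (Fin n) K := e * P with hu
  set v : Matrix (Fin n) (Fin n) K := f * P with hv
  -- the derivation equations
  have h1 : δ 0 = δ u * u + u * δ u := by
    have h := hδ u u hranku hranku
    rwa [huu] at h
  have h2 : δ u = δ e * u + e * δ u := by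
    have h := hδ e u hranke hranku
    rwa [heu] at h
  have k1 : δ 0 = δ v * v + v * δ v := by
    have h := hδ v v hrankv hrankv
    rwa [hvv] at h
  have k2 : δ v = δ f * v + f * δ v := by
    have h := hδ f v hrankf hrankv
    rwa [hfv] at h
  have hCu : δ u * u = e * (δ u * u) := by
    conv_lhs => rw [h2]
    rw [add_mul, mul_assoc (δ e), huu, mul_zero, zero_add, mul_assoc]
  have hEv : δ v * v = f * (δ v * v) := by
    conv_lhs => rw [k2]
    rw [add_mul, mul_assoc (δ f), hvv, mul_zero, zero_add, mul_assoc]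
  have heD : e * δ 0 = δ 0 := by
    conv_lhs => rw [h1]
    rw [mul_add, ← mul_assoc e u (δ u), heu, ← hCu, ← h1]
  have hfD : f * δ 0 = δ 0 := by
    conv_lhs => rw [k1]
    rw [mul_add, ← mul_assoc f v (δ v), hfv, ← hEv, ← k1]
  calc δ 0 = e * (f * δ 0) := by rw [hfD, heD]
  _ = (e * f) * δ 0 := by rw [mul_assoc]
  _ = 0 := by rw [hef, zero_mul]
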